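/- arXiv:2309.01577 — 2 statements merged into one kernel-verified Lean document; each statement's English description precedes it below -/
import Mathlib

section
/- Let n ≥ 1 and let W be a finite group of n×n complex orthogonal matrices (AᵀA = I) acting on ℂ[x₁,…,xₙ] by linear substitution of variables. Suppose the algebra ℂ[x₁,…,xₙ]^W of W-invariant polynomials is generated as a ℂ-algebra by homogeneous W-invariant polynomials y₁,…,yₙ of degrees d₁ ≥ d₂ ≥ … ≥ d_{n−1} > dₙ = 2. Then there exist homogeneous W-invariant polynomials Y₁,…,Yₙ with deg Yⱼ = dⱼ which also generate ℂ[x₁,…,xₙ]^W as a ℂ-algebra, such that Δ(Yₙ) = 1 and Δ(Yⱼ) = 0 for every j = 1,…,n−1. -/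
open MvPolynomial Matrix

noncomputable section

/-- Action of an `n × n` complex matrix on `ℂ[x₁, …, xₙ]` by the linear substitution
of variables `xᵢ ↦ ∑ⱼ Aᵢⱼ xⱼ`. -/
def matAct {n : ℕ} (A : Matrix (Fin n) (Fin n) ℂ) (p : MvPolynomial (Fin n) ℂ) :
    MvPolynomial (Fin n) ℂ :=
  aeval (fun i => ∑ j, C (A i j) * X j) p

/-- The Laplace operator `Δp = ∑ₐ ∂²p/∂xₐ²`. -/
def lap {n : ℕ} (p : MvPolynomial (Fin n) ℂ) : MvPolynomial (Fin n) ℂ :=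
  ∑ a, pderiv a (pderiv a p)

namespace Aux


variable {n : ℕ}

@[simp] lemma matAct_add (A : Matrix (Fin n) (Fin n) ℂ) (p q : MvPolynomial (Fin n) ℂ) :
    matAct A (p + q) = matAct A p + matAct A q := map_add _ _ _

@[simp] lemma matAct_mul (A : Matrix (Fin n) (Fin n) ℂ) (p q : MvPolynomial (Fin n) ℂ) :
    matAct A (p * q) = matAct A p * matAct A q := map_mul _ _ _

@[simp] lemma matAct_C (A : Matrix (Fin n) (Fin n) ℂ) (c : ℂ) :
    matAct A (C c) = C c := by simp [matAct]

@[simp] lemma matAct_one (A : Matrix (Fin n) (Fin n) ℂ) :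
    matAct A (1 : MvPolynomial (Fin n) ℂ) = 1 := map_one _

@[simp] lemma matAct_zero (A : Matrix (Fin n) (Fin n) ℂ) :
    matAct A (0 : MvPolynomial (Fin n) ℂ) = 0 := map_zero _

@[simp] lemma matAct_pow (A : Matrix (Fin n) (Fin n) ℂ) (p : MvPolynomial (Fin n) ℂ) (k : ℕ) :
    matAct A (p ^ k) = matAct A p ^ k := map_pow _ _ _

@[simp] lemma matAct_smul (A : Matrix (Fin n) (Fin n) ℂ) (c : ℂ) (p : MvPolynomial (Fin n) ℂ) :
    matAct A (c • p) = c • matAct A p := by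
  simp [matAct]

@[simp] lemma matAct_sub (A : Matrix (Fin n) (Fin n) ℂ) (p q : MvPolynomial (Fin n) ℂ) :
    matAct A (p - q) = matAct A p - matAct A q := map_sub _ _ _

@[simp] lemma matAct_X (A : Matrix (Fin n) (Fin n) ℂ) (i : Fin n) :
    matAct A (X i) = ∑ j, C (A i j) * X j := by simp [matAct]

lemma matAct_sum {ι : Type*} (A : Matrix (Fin n) (Fin n) ℂ) (s : Finset ι)
    (f : ι → MvPolynomial (Fin n) ℂ) :
    matAct A (∑ i ∈ s, f i) = ∑ i ∈ s, matAct A (f i) := map_sum _ _ _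

lemma pderiv_matAct (A : Matrix (Fin n) (Fin n) ℂ) (a : Fin n) (p : MvPolynomial (Fin n) ℂ) :
    pderiv a (matAct A p) = ∑ b, C (A b a) * matAct A (pderiv b p) := by
  induction p using MvPolynomial.induction_on with
  | C c => simp
  | add p q hp hq => simp [hp, hq, mul_add, Finset.sum_add_distrib]
  | mul_X p i hp =>
      classical
      have hL : pderiv a (∑ j, C (A i j) * X j) = C (A i a) := by
        rw [map_sum]
        rw [Finset.sum_eq_single a]
        · simp
        · intro b _ hb
          simp [pderiv_X, Pi.single_eq_of_ne hb]
        · simp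
      rw [matAct_mul, matAct_X, pderiv_mul, hL, hp]
      have hR : ∀ b : Fin n,
          C (A b a) * matAct A (pderiv b (p * X i)) =
          C (A b a) * matAct A (pderiv b p) * (∑ j, C (A i j) * X j)
            + C (A b a) * matAct A (p * (if i = b then 1 else 0)) := by
        intro b
        rw [pderiv_mul, pderiv_X]
        by_cases h : i = b
        · subst h; simp [mul_add, mul_assoc]
        · simp [Pi.single_eq_of_ne (Ne.symm h), h, mul_add, mul_assoc]
      rw [Finset.sum_congr rfl fun b _ => hR b, Finset.sum_add_distrib, ← Finset.sum_mul]
      congr 1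
      rw [Finset.sum_eq_single i]
      · simp [mul_comm]
      · intro b _ hb; simp [Ne.symm hb]
      · simp



@[simp] lemma lap_add (p q : MvPolynomial (Fin n) ℂ) : lap (p + q) = lap p + lap q := by
  simp [lap, Finset.sum_add_distrib]

@[simp] lemma lap_zero : lap (0 : MvPolynomial (Fin n) ℂ) = 0 := by simp [lap]

@[simp] lemma lap_smul (c : ℂ) (p : MvPolynomial (Fin n) ℂ) : lap (c • p) = c • lap p := by
  simp [lap, Finset.smul_sum]

@[simp] lemma lap_C_mul (c : ℂ) (p : MvPolynomial (Fin n) ℂ) : lap (C c * p) = C c * lap p := by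
  simp [lap, pderiv_C_mul, Finset.mul_sum]

@[simp] lemma lap_C (c : ℂ) : lap (C c : MvPolynomial (Fin n) ℂ) = 0 := by simp [lap]

lemma lap_sum {ι : Type*} (s : Finset ι) (f : ι → MvPolynomial (Fin n) ℂ) :
    lap (∑ i ∈ s, f i) = ∑ i ∈ s, lap (f i) := by
  unfold lap
  rw [Finset.sum_comm]
  refine Finset.sum_congr rfl fun a _ => ?_
  rw [map_sum, map_sum]

lemma lap_matAct (A : Matrix (Fin n) (Fin n) ℂ) (hA : Aᵀ * A = 1)
    (p : MvPolynomial (Fin n) ℂ) : lap (matAct A p) = matAct A (lap p) := by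
  classical
  have hA' : A * Aᵀ = 1 := mul_eq_one_comm.mp hA
  have key : ∀ b c : Fin n, (∑ a, A b a * A c a) = if b = c then 1 else 0 := by
    intro b c
    have := congrArg (fun M => M b c) hA'
    simpa [Matrix.mul_apply, Matrix.one_apply, Matrix.transpose_apply] using this
  calc lap (matAct A p)
      = ∑ a, pderiv a (∑ b, C (A b a) * matAct A (pderiv b p)) := by
        simp [lap, pderiv_matAct]
    _ = ∑ a, ∑ b, C (A b a) * (∑ c, C (A c a) * matAct A (pderiv c (pderiv b p))) := by
        refine Finset.sum_congr rfl fun a _ => ?_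
        rw [map_sum]
        refine Finset.sum_congr rfl fun b _ => ?_
        rw [pderiv_C_mul, pderiv_matAct]
    _ = ∑ b, ∑ c, (∑ a, C (A b a) * C (A c a)) * matAct A (pderiv c (pderiv b p)) := by
        rw [Finset.sum_comm]
        refine Finset.sum_congr rfl fun b _ => ?_
        simp_rw [Finset.mul_sum, ← mul_assoc]
        rw [Finset.sum_comm]
        refine Finset.sum_congr rfl fun c _ => ?_
        rw [Finset.sum_mul]
    _ = ∑ b, matAct A (pderiv b (pderiv b p)) := by
        refine Finset.sum_congr rfl fun b _ => ?_
        rw [Finset.sum_eq_single b]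
        · have : (∑ a, C (A b a) * C (A b a) : MvPolynomial (Fin n) ℂ) = 1 := by
            simp_rw [← C_mul, ← map_sum C, key]
            simp
          rw [this, one_mul]
        · intro c _ hc
          have : (∑ a, C (A b a) * C (A c a) : MvPolynomial (Fin n) ℂ) = 0 := by
            simp_rw [← C_mul, ← map_sum C, key]
            simp [Ne.symm hc]
          rw [this, zero_mul]
        · simp
    _ = matAct A (lap p) := by
        rw [lap, matAct, map_sum]
        rfl



/-- The quadratic form `∑ xᵢ²`. -/
def q (n : ℕ) : MvPolynomial (Fin n) ℂ := ∑ i, X i ^ 2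

lemma q_isHomogeneous : (q n).IsHomogeneous 2 :=
  IsHomogeneous.sum _ _ _ fun i _ => isHomogeneous_X_pow i 2

lemma q_ne_zero (hn : 1 ≤ n) : q n ≠ 0 := by
  intro h
  have := congrArg (eval (fun _ : Fin n => (1 : ℂ))) h
  simp [q] at this
  omega

lemma matAct_q (A : Matrix (Fin n) (Fin n) ℂ) (hA : Aᵀ * A = 1) : matAct A (q n) = q n := by
  classical
  have key : ∀ j k : Fin n, (∑ i, A i j * A i k) = if j = k then 1 else 0 := by
    intro j k
    have := congrArg (fun M => M j k) hA
    simpa [Matrix.mul_apply, Matrix.one_apply, Matrix.transpose_apply] using this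
  have : matAct A (q n) = ∑ i, (∑ j, C (A i j) * X j) * (∑ k, C (A i k) * X k) := by
    simp [q, matAct, sq]
  rw [this]
  have expand : ∀ i : Fin n, (∑ j, C (A i j) * X j) * (∑ k, C (A i k) * X k)
      = ∑ j, ∑ k, (C (A i j) * C (A i k)) * (X j * X k) := by
    intro i
    rw [Finset.sum_mul_sum]
    refine Finset.sum_congr rfl fun j _ => Finset.sum_congr rfl fun k _ => by ring
  rw [Finset.sum_congr rfl fun i _ => expand i, Finset.sum_comm]
  have : ∀ j : Fin n, (∑ i, ∑ k, (C (A i j) * C (A i k)) * (X j * X k : MvPolynomial (Fin n) ℂ))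
      = ∑ k, (C (∑ i, A i j * A i k)) * (X j * X k) := by
    intro j
    rw [Finset.sum_comm]
    refine Finset.sum_congr rfl fun k _ => ?_
    rw [← Finset.sum_mul]
    congr 1
    simp [map_sum]
  rw [Finset.sum_congr rfl fun j _ => this j]
  unfold q
  refine Finset.sum_congr rfl fun j _ => ?_
  rw [Finset.sum_eq_single j]
  · simp [key, sq]
  · intro k _ hk
    simp [key, Ne.symm hk]
  · simp

lemma lap_q : lap (q n) = C (2 * n : ℂ) := by
  classical
  unfold lap q
  have : ∀ a i : Fin n, pderiv a (pderiv a (X i ^ 2 : MvPolynomial (Fin n) ℂ))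
      = if i = a then 2 else 0 := by
    intro a i
    by_cases h : i = a
    · subst h
      rw [sq, pderiv_mul, pderiv_X_self, mul_one, one_mul, map_add, pderiv_X_self]
      norm_num
    · rw [pderiv_pow]
      simp [pderiv_X_of_ne h, h]
  simp_rw [map_sum, this, Finset.sum_ite_eq', Finset.mem_univ, if_true, Finset.sum_const,
    Finset.card_univ, Fintype.card_fin, nsmul_eq_mul]
  rw [_root_.map_mul, map_ofNat, ← C_eq_coe_nat]
  ring



lemma degree_eq_sum_univ (s : Fin n →₀ ℕ) : s.degree = ∑ a, s a := by
  rw [show s.degree = ∑ i ∈ s.support, s i from rfl]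
  refine Finset.sum_subset (Finset.subset_univ _) ?_
  intro x _ hx
  exact Finsupp.notMem_support_iff.mp hx

lemma degree_add (u v : Fin n →₀ ℕ) : (u + v).degree = u.degree + v.degree := by
  simp only [degree_eq_sum_univ, Finsupp.add_apply]
  rw [Finset.sum_add_distrib]

lemma degree_single_one (a : Fin n) : (Finsupp.single a 1).degree = 1 := by
  simp [degree_eq_sum_univ, Finsupp.single_apply]

lemma euler {p : MvPolynomial (Fin n) ℂ} {m : ℕ} (hp : p.IsHomogeneous m) :
    ∑ a, X a * pderiv a p = (m : ℂ) • p := by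
  classical
  have key : ∀ s ∈ p.support, ∑ a, X a * pderiv a (monomial s (coeff s p))
      = (m : ℂ) • monomial s (coeff s p) := by
    intro s hs
    have hdeg : s.degree = m := by
      have := hp (MvPolynomial.mem_support_iff.mp hs)
      rw [Finsupp.degree_eq_weight_one]; exact this
    have term : ∀ a : Fin n, X a * pderiv a (monomial s (coeff s p))
        = (s a : ℂ) • monomial s (coeff s p) := by
      intro a
      rw [pderiv_monomial]
      by_cases h : s a = 0
      · simp [h]
      · have hle : Finsupp.single a 1 ≤ s := by
          rw [Finsupp.single_le_iff]
          omega
        have : X a * (monomial (s - Finsupp.single a 1)) (coeff s p * ↑(s a))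
            = monomial (s - Finsupp.single a 1 + Finsupp.single a 1) (coeff s p * ↑(s a)) := by
          rw [X, monomial_mul]
          congr 1
          · rw [add_comm]
          · ring
        rw [this, tsub_add_cancel_of_le hle, smul_monomial, smul_eq_mul, mul_comm]
    rw [Finset.sum_congr rfl fun a _ => term a, ← Finset.sum_smul, ← Nat.cast_sum,
      ← degree_eq_sum_univ, hdeg]
  calc ∑ a, X a * pderiv a p
      = ∑ a, X a * pderiv a (∑ s ∈ p.support, monomial s (coeff s p)) := by
        rw [← as_sum p]
    _ = ∑ s ∈ p.support, ∑ a, X a * pderiv a (monomial s (coeff s p)) := by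
        rw [Finset.sum_comm]
        refine Finset.sum_congr rfl fun a _ => ?_
        rw [map_sum, Finset.mul_sum]
    _ = ∑ s ∈ p.support, (m : ℂ) • monomial s (coeff s p) :=
        Finset.sum_congr rfl key
    _ = (m : ℂ) • p := by rw [← Finset.smul_sum, ← as_sum p]

lemma isHomogeneous_pderiv {p : MvPolynomial (Fin n) ℂ} {m : ℕ} (hp : p.IsHomogeneous m)
    (a : Fin n) : (pderiv a p).IsHomogeneous (m - 1) := by
  classical
  rw [as_sum p, map_sum]
  refine IsHomogeneous.sum _ _ _ fun s hs => ?_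
  have hdeg : s.degree = m := by
    have := hp (MvPolynomial.mem_support_iff.mp hs)
    rw [Finsupp.degree_eq_weight_one]; exact this
  rw [pderiv_monomial]
  by_cases h : s a = 0
  · simp [h]
    exact isHomogeneous_zero _ _ _
  · refine isHomogeneous_monomial _ ?_
    have hle : Finsupp.single a 1 ≤ s := by
      rw [Finsupp.single_le_iff]; omega
    have hcanc : (s - Finsupp.single a 1) + Finsupp.single a 1 = s :=
      tsub_add_cancel_of_le hle
    have := congrArg Finsupp.degree hcanc
    rw [degree_add, degree_single_one, hdeg] at this
    omega

lemma isHomogeneous_lap {p : MvPolynomial (Fin n) ℂ} {m : ℕ} (hp : p.IsHomogeneous m) :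
    (lap p).IsHomogeneous (m - 2) := by
  refine IsHomogeneous.sum _ _ _ fun a _ => ?_
  have := isHomogeneous_pderiv (isHomogeneous_pderiv hp a) a
  rwa [Nat.sub_sub] at this

lemma pderiv_eq_zero_of_isHomogeneous_zero {p : MvPolynomial (Fin n) ℂ}
    (hp : p.IsHomogeneous 0) (a : Fin n) : pderiv a p = 0 := by
  classical
  rw [as_sum p, map_sum]
  refine Finset.sum_eq_zero fun s hs => ?_
  have hdeg : s.degree = 0 := by
    have := hp (MvPolynomial.mem_support_iff.mp hs)
    rw [Finsupp.degree_eq_weight_one]; exact this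
  have hs0 : s a = 0 := by
    have := degree_eq_sum_univ s
    rw [hdeg] at this
    have := (Finset.sum_eq_zero_iff (s := Finset.univ) (f := fun a => s a)).mp this.symm
    exact this a (Finset.mem_univ a)
  rw [pderiv_monomial, hs0]
  simp

lemma lap_eq_zero_of_le_one {p : MvPolynomial (Fin n) ℂ} {m : ℕ} (hp : p.IsHomogeneous m)
    (hm : m ≤ 1) : lap p = 0 := by
  refine Finset.sum_eq_zero fun a _ => ?_
  have h1 : (pderiv a p).IsHomogeneous 0 := by
    have := isHomogeneous_pderiv hp a
    rwa [Nat.sub_eq_zero_of_le hm] at this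
  exact pderiv_eq_zero_of_isHomogeneous_zero h1 a


lemma pderiv_q (a : Fin n) : pderiv a (q n) = C 2 * X a := by
  classical
  unfold q
  rw [map_sum]
  rw [Finset.sum_eq_single a]
  · rw [sq, pderiv_mul, pderiv_X_self, mul_one, one_mul, map_ofNat]
    ring
  · intro b _ hb
    rw [sq, pderiv_mul, pderiv_X_of_ne hb]
    simp
  · simp

lemma lap_mul (f g : MvPolynomial (Fin n) ℂ) :
    lap (f * g) = lap f * g + 2 * ∑ a, pderiv a f * pderiv a g + f * lap g := by
  unfold lap
  have : ∀ a : Fin n, pderiv a (pderiv a (f * g)) =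
      pderiv a (pderiv a f) * g + 2 * (pderiv a f * pderiv a g) + f * pderiv a (pderiv a g) := by
    intro a
    rw [pderiv_mul, map_add, pderiv_mul, pderiv_mul]
    ring
  rw [Finset.sum_congr rfl fun a _ => this a]
  rw [Finset.sum_add_distrib, Finset.sum_add_distrib, ← Finset.sum_mul, ← Finset.mul_sum,
    ← Finset.mul_sum]

lemma lap_q_mul {r : MvPolynomial (Fin n) ℂ} {m : ℕ} (hr : r.IsHomogeneous m) :
    lap (q n * r) = C ((2 * n + 4 * m : ℕ) : ℂ) * r + q n * lap r := by
  rw [lap_mul, lap_q]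
  have : ∑ a, pderiv a (q n) * pderiv a r = C 2 * ((m : ℂ) • r) := by
    rw [← euler hr, Finset.mul_sum]
    refine Finset.sum_congr rfl fun a _ => ?_
    rw [pderiv_q]
    ring
  rw [this, smul_eq_C_mul]
  push_cast
  simp only [map_add, _root_.map_mul, map_ofNat, _root_.map_one]
  ring

lemma lap_qpow_mul {g : MvPolynomial (Fin n) ℂ} {e : ℕ} (hg : g.IsHomogeneous e) (k : ℕ) :
    lap (q n ^ (k + 1) * g) =
      C ((2 * (k + 1) * (n + 2 * e + 2 * k) : ℕ) : ℂ) * (q n ^ k * g) +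
        q n ^ (k + 1) * lap g := by
  induction k with
  | zero =>
      have h := lap_q_mul hg
      rw [pow_one, pow_zero, one_mul, h]
      congr 2
      push_cast; ring
  | succ k ih =>
      have hqk : (q n ^ (k + 1) * g).IsHomogeneous (2 * (k + 1) + e) := by
        simpa using (q_isHomogeneous.pow (k + 1)).mul hg
      have step : lap (q n * (q n ^ (k + 1) * g)) =
          C ((2 * n + 4 * (2 * (k + 1) + e) : ℕ) : ℂ) * (q n ^ (k + 1) * g) +
            q n * lap (q n ^ (k + 1) * g) := lap_q_mul hqk
      have assoc : q n ^ (k + 1 + 1) * g = q n * (q n ^ (k + 1) * g) := by ring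
      rw [assoc, step, ih]
      push_cast
      simp only [map_add, _root_.map_mul, map_ofNat, _root_.map_one]
      ring

/-- The constant in `Δ(q^k g) = ν q^(k-1) g + q^k Δg`. -/
def nuc (n d k : ℕ) : ℕ := 2 * k * (n + 2 * (d - 2 * k) + 2 * (k - 1))

/-- Coefficients of the explicit harmonic projection. -/
def cf (n d : ℕ) : ℕ → ℂ
  | 0 => 1
  | k + 1 => - cf n d k / (nuc n d (k + 1) : ℂ)

lemma nuc_pos (hn : 1 ≤ n) (d k : ℕ) : 0 < nuc n d (k + 1) := by
  have h1 : 0 < 2 * (k + 1) := by omega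
  have h2 : 0 < n + 2 * (d - 2 * (k + 1)) + 2 * (k + 1 - 1) := by omega
  exact Nat.mul_pos h1 h2

lemma cf_rec (hn : 1 ≤ n) (d k : ℕ) :
    cf n d (k + 1) * (nuc n d (k + 1) : ℂ) + cf n d k = 0 := by
  have hne : ((nuc n d (k + 1) : ℕ) : ℂ) ≠ 0 :=
    Nat.cast_ne_zero.mpr (nuc_pos hn d k).ne'
  rw [show cf n d (k + 1) = - cf n d k / (nuc n d (k + 1) : ℂ) from rfl,
    div_mul_cancel₀ _ hne]
  ring

lemma iter_lap_isHomogeneous {p : MvPolynomial (Fin n) ℂ} {dd : ℕ} (hp : p.IsHomogeneous dd)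
    (k : ℕ) : (lap^[k] p).IsHomogeneous (dd - 2 * k) := by
  induction k with
  | zero => simpa using hp
  | succ k ih =>
      rw [Function.iterate_succ_apply']
      have := isHomogeneous_lap ih
      rwa [show dd - 2 * k - 2 = dd - 2 * (k + 1) by omega] at this

lemma iter_lap_eq_zero {p : MvPolynomial (Fin n) ℂ} {dd : ℕ} (hp : p.IsHomogeneous dd)
    {k : ℕ} (hk : dd < 2 * k) : lap^[k] p = 0 := by
  obtain ⟨j, rfl⟩ : ∃ j, k = j + 1 := ⟨k - 1, by omega⟩
  rw [Function.iterate_succ_apply']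
  exact lap_eq_zero_of_le_one (iter_lap_isHomogeneous hp j) (by omega)

lemma matAct_iter_lap {p : MvPolynomial (Fin n) ℂ} {A : Matrix (Fin n) (Fin n) ℂ}
    (hA : Aᵀ * A = 1) (hp : matAct A p = p) (k : ℕ) :
    matAct A (lap^[k] p) = lap^[k] p := by
  induction k with
  | zero => simpa using hp
  | succ k ih =>
      rw [Function.iterate_succ_apply', ← lap_matAct A hA, ih]

lemma lap_qpow_mul' {p : MvPolynomial (Fin n) ℂ} {dd : ℕ} (hp : p.IsHomogeneous dd) (k : ℕ) :
    lap (q n ^ k * lap^[k] p) =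
      C (nuc n dd k : ℂ) * (q n ^ (k - 1) * lap^[k] p) + q n ^ k * lap^[k + 1] p := by
  cases k with
  | zero =>
      simp only [pow_zero, one_mul, Function.iterate_zero_apply, zero_add, Function.iterate_one,
        show ((nuc n dd 0 : ℕ) : ℂ) = 0 by norm_num [nuc], map_zero, zero_mul]
  | succ j =>
      have := lap_qpow_mul (iter_lap_isHomogeneous hp (j + 1)) j
      rw [this, Function.iterate_succ_apply' lap (j+1)]
      rfl

lemma harmonic_decomp (hn : 1 ≤ n) {p : MvPolynomial (Fin n) ℂ} {dd : ℕ}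
    (hp : p.IsHomogeneous dd) :
    ∃ h r : MvPolynomial (Fin n) ℂ,
      p = h + q n * r ∧ lap h = 0 ∧ h.IsHomogeneous dd ∧ r.IsHomogeneous (dd - 2) ∧
      (∀ A : Matrix (Fin n) (Fin n) ℂ, Aᵀ * A = 1 → matAct A p = p →
        matAct A h = h ∧ matAct A r = r) := by
  classical
  set P : ℕ → MvPolynomial (Fin n) ℂ := fun k => lap^[k] p with hP
  set h : MvPolynomial (Fin n) ℂ :=
    ∑ k ∈ Finset.range (dd + 1), C (cf n dd k) * (q n ^ k * P k) with hh
  set r : MvPolynomial (Fin n) ℂ :=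
    ∑ k ∈ Finset.range dd, C (-(cf n dd (k + 1))) * (q n ^ k * P (k + 1)) with hr
  have hPhom : ∀ k, (P k).IsHomogeneous (dd - 2 * k) := fun k => iter_lap_isHomogeneous hp k
  have hPzero : ∀ k, dd < 2 * k → P k = 0 := fun k hk => iter_lap_eq_zero hp hk
  refine ⟨h, r, ?_, ?_, ?_, ?_, ?_⟩
  · -- p = h + q * r
    rw [hh, Finset.sum_range_succ']
    have : q n * r = ∑ k ∈ Finset.range dd, C (-(cf n dd (k + 1))) * (q n ^ (k + 1) * P (k + 1)) := by
      rw [hr, Finset.mul_sum]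
      refine Finset.sum_congr rfl fun k _ => by ring
    rw [this]
    simp only [map_neg, neg_mul, pow_zero, one_mul]
    rw [show cf n dd 0 = 1 from rfl, _root_.map_one, one_mul,
      show P 0 = p from rfl, Finset.sum_neg_distrib]
    abel
  · -- lap h = 0
    rw [hh, lap_sum]
    have step : ∀ k, lap (C (cf n dd k) * (q n ^ k * P k)) =
        C (cf n dd k) * C (nuc n dd k : ℂ) * (q n ^ (k - 1) * P k)
          + C (cf n dd k) * (q n ^ k * P (k + 1)) := by
      intro k
      rw [lap_C_mul, lap_qpow_mul' hp k, mul_add, mul_assoc]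
    rw [Finset.sum_congr rfl fun k _ => step k, Finset.sum_add_distrib]
    rw [Finset.sum_range_succ' (fun k => C (cf n dd k) * C (nuc n dd k : ℂ) * (q n ^ (k - 1) * P k)) dd]
    rw [Finset.sum_range_succ (fun k => C (cf n dd k) * (q n ^ k * P (k + 1))) dd]
    have hlast : C (cf n dd dd) * (q n ^ dd * P (dd + 1)) = 0 := by
      rw [hPzero (dd + 1) (by omega)]
      ring
    have hzerok : C (cf n dd 0) * C (nuc n dd 0 : ℂ) * (q n ^ (0 - 1) * P 0) = 0 := by
      rw [show nuc n dd 0 = 0 by unfold nuc; omega]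
      simp
    rw [hlast, hzerok, add_zero, add_zero, ← Finset.sum_add_distrib]
    refine Finset.sum_eq_zero fun k _ => ?_
    have : (C (cf n dd (k + 1)) * C ((nuc n dd (k + 1) : ℕ) : ℂ) + C (cf n dd k)
        : MvPolynomial (Fin n) ℂ) = 0 := by
      rw [← _root_.map_mul, ← map_add, cf_rec hn dd k, map_zero]
    calc C (cf n dd (k + 1)) * C (nuc n dd (k + 1) : ℂ) * (q n ^ (k + 1 - 1) * P (k + 1))
          + C (cf n dd k) * (q n ^ k * P (k + 1))
        = (C (cf n dd (k + 1)) * C (nuc n dd (k + 1) : ℂ) + C (cf n dd k))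
            * (q n ^ k * P (k + 1)) := by
          rw [show k + 1 - 1 = k from rfl]; ring
      _ = 0 := by rw [this, zero_mul]
  · -- h homogeneous dd
    rw [hh]
    refine IsHomogeneous.sum _ _ _ fun k hk => ?_
    by_cases hkd : 2 * k ≤ dd
    · have := ((q_isHomogeneous.pow k).mul (hPhom k)).C_mul (cf n dd k)
      rwa [show 2 * k + (dd - 2 * k) = dd by omega] at this
    · rw [hPzero k (by omega), mul_zero, mul_zero]
      exact isHomogeneous_zero _ _ _
  · -- r homogeneous dd - 2
    rw [hr]
    refine IsHomogeneous.sum _ _ _ fun k hk => ?_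
    by_cases hkd : 2 * (k + 1) ≤ dd
    · have := ((q_isHomogeneous.pow k).mul (hPhom (k + 1))).C_mul (-(cf n dd (k + 1)))
      rwa [show 2 * k + (dd - 2 * (k + 1)) = dd - 2 by omega] at this
    · rw [hPzero (k + 1) (by omega), mul_zero, mul_zero]
      exact isHomogeneous_zero _ _ _
  · -- invariance
    intro A hA hpA
    constructor
    · rw [hh, matAct_sum]
      refine Finset.sum_congr rfl fun k _ => ?_
      rw [matAct_mul, matAct_mul, matAct_C, matAct_pow, matAct_q A hA,
        matAct_iter_lap hA hpA]
    · rw [hr, matAct_sum]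
      refine Finset.sum_congr rfl fun k _ => ?_
      rw [matAct_mul, matAct_mul, matAct_C, matAct_pow, matAct_q A hA,
        matAct_iter_lap hA hpA]

lemma matAct_isHomogeneous {p : MvPolynomial (Fin n) ℂ} {m : ℕ}
    (hp : p.IsHomogeneous m) (A : Matrix (Fin n) (Fin n) ℂ) :
    (matAct A p).IsHomogeneous m := by
  have hg : ∀ i : Fin n, ((∑ j, C (A i j) * X j : MvPolynomial (Fin n) ℂ)).IsHomogeneous 1 :=
    fun i => IsHomogeneous.sum _ _ _ fun j _ => isHomogeneous_C_mul_X _ _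
  have := hp.aeval (fun i => ∑ j, C (A i j) * X j) hg
  rwa [one_mul] at this

lemma matAct_homogeneousComponent (A : Matrix (Fin n) (Fin n) ℂ)
    (p : MvPolynomial (Fin n) ℂ) (m : ℕ) :
    homogeneousComponent m (matAct A p) = matAct A (homogeneousComponent m p) := by
  classical
  set N := p.totalDegree with hN
  have hdecomp : matAct A p = ∑ k ∈ Finset.range (N + 1), matAct A (homogeneousComponent k p) := by
    rw [← matAct_sum, sum_homogeneousComponent]
  rw [hdecomp, map_sum]
  have : ∀ k, homogeneousComponent m (matAct A (homogeneousComponent k p))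
      = if m = k then matAct A (homogeneousComponent k p) else 0 :=
    fun k => homogeneousComponent_of_mem
      (matAct_isHomogeneous (homogeneousComponent_isHomogeneous k p) A)
  rw [Finset.sum_congr rfl fun k _ => this k, Finset.sum_ite_eq]
  by_cases hm : m ∈ Finset.range (N + 1)
  · rw [if_pos hm]
  · rw [if_neg hm]
    have hNm : p.totalDegree < m := by
      simp only [Finset.mem_range, not_lt] at hm
      omega
    rw [homogeneousComponent_eq_zero m p hNm, matAct_zero]

lemma mem_span_weighted {y : Fin n → MvPolynomial (Fin n) ℂ} {d : Fin n → ℕ}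
    (hyhom : ∀ i, (y i).IsHomogeneous (d i)) {p : MvPolynomial (Fin n) ℂ} {m : ℕ}
    (hp : p.IsHomogeneous m) (hmem : p ∈ Algebra.adjoin ℂ (Set.range y)) :
    p ∈ Submodule.span ℂ
      {g : MvPolynomial (Fin n) ℂ |
        ∃ α : Fin n →₀ ℕ, (∑ i, d i * α i) = m ∧ g = ∏ i, y i ^ α i} := by
  classical
  rw [Algebra.adjoin_range_eq_range_aeval] at hmem
  obtain ⟨F, hF⟩ := hmem
  have hF' : aeval y F = p := hF
  have hFsum : p = ∑ α ∈ F.support, C (coeff α F) * ∏ i, y i ^ α i := by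
    conv_lhs => rw [← hF']
    rw [show (aeval y) F = aeval y (∑ α ∈ F.support, monomial α (coeff α F)) by
      rw [← as_sum F], map_sum]
    refine Finset.sum_congr rfl fun α _ => ?_
    rw [aeval_monomial, algebraMap_eq, Finsupp.prod_pow]
  have hT : ∀ α : Fin n →₀ ℕ, (∏ i, y i ^ α i).IsHomogeneous (∑ i, d i * α i) :=
    fun α => IsHomogeneous.prod _ _ _ fun i _ => (hyhom i).pow (α i)
  have hcomp : p = ∑ α ∈ F.support,
      if m = ∑ i, d i * α i then C (coeff α F) * ∏ i, y i ^ α i else 0 := by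
    have h1 : p = homogeneousComponent m p := by
      rw [homogeneousComponent_of_mem hp, if_pos rfl]
    conv_lhs => rw [h1, hFsum]
    rw [map_sum]
    exact Finset.sum_congr rfl fun α _ => homogeneousComponent_of_mem ((hT α).C_mul _)
  rw [hcomp]
  refine Submodule.sum_mem _ fun α _ => ?_
  by_cases hα : m = ∑ i, d i * α i
  · rw [if_pos hα]
    have hgen : (∏ i, y i ^ α i) ∈
        {g : MvPolynomial (Fin n) ℂ |
          ∃ β : Fin n →₀ ℕ, (∑ i, d i * β i) = m ∧ g = ∏ i, y i ^ β i} :=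
      ⟨α, hα.symm, rfl⟩
    rw [show C (coeff α F) * ∏ i, y i ^ α i = coeff α F • ∏ i, y i ^ α i by
      rw [smul_eq_C_mul]]
    exact Submodule.smul_mem _ _ (Submodule.subset_span hgen)
  · rw [if_neg hα]
    exact Submodule.zero_mem _

end Aux

open Aux

/-- If the invariant algebra of a finite group `W` of complex orthogonal matrices is generated
by homogeneous invariants `y₁, …, yₙ` of degrees `d₁ ≥ … ≥ d_{n-1} > dₙ = 2`, then there is a
set of homogeneous generators `Y₁, …, Yₙ` of the same degrees with `Δ(Yₙ) = 1` and `Δ(Yⱼ) = 0`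
for `j = 1, …, n-1`. -/

theorem statement_1 (n : ℕ) (hn : 1 ≤ n) (W : Set (Matrix (Fin n) (Fin n) ℂ))
    (hone : (1 : Matrix (Fin n) (Fin n) ℂ) ∈ W)
    (hmul : ∀ A ∈ W, ∀ B ∈ W, A * B ∈ W)
    (hinv : ∀ A ∈ W, Aᵀ ∈ W)
    (horth : ∀ A ∈ W, Aᵀ * A = 1)
    (hfin : W.Finite)
    (y : Fin n → MvPolynomial (Fin n) ℂ) (d : Fin n → ℕ)
    (hyinv : ∀ i, ∀ A ∈ W, matAct A (y i) = y i)
    (hyhom : ∀ i, (y i).IsHomogeneous (d i))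
    (hmono : ∀ i j : Fin n, i ≤ j → d j ≤ d i)
    (hlast : d ⟨n - 1, by omega⟩ = 2)
    (hgt : ∀ i : Fin n, (i : ℕ) < n - 1 → 2 < d i)
    (hgen : ∀ p : MvPolynomial (Fin n) ℂ,
      p ∈ Algebra.adjoin ℂ (Set.range y) ↔ ∀ A ∈ W, matAct A p = p) :
    ∃ Y : Fin n → MvPolynomial (Fin n) ℂ,
      (∀ i, (Y i).IsHomogeneous (d i)) ∧
      (∀ i, ∀ A ∈ W, matAct A (Y i) = Y i) ∧
      (∀ p : MvPolynomial (Fin n) ℂ,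
        p ∈ Algebra.adjoin ℂ (Set.range Y) ↔ ∀ A ∈ W, matAct A p = p) ∧
      lap (Y ⟨n - 1, by omega⟩) = 1 ∧
      (∀ i : Fin n, (i : ℕ) < n - 1 → lap (Y i) = 0) := by
  classical
  set last : Fin n := ⟨n - 1, by omega⟩ with hlastdef
  -- harmonic decompositions of the yⱼ
  choose hh rr hsum hlaph hhom hrhom hinvhr using
    fun j : Fin n => harmonic_decomp hn (hyhom j)
  -- degrees are all ≥ 2, and = 2 only at `last`
  have hd2 : ∀ i : Fin n, 2 ≤ d i := by
    intro i
    by_cases hi : (i : ℕ) < n - 1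
    · exact le_of_lt (hgt i hi)
    · have : i = last := by
        apply Fin.ext
        have := i.isLt
        simp only [hlastdef]
        omega
      rw [this, hlast]
  have hne_last : ∀ j : Fin n, j ≠ last → (j : ℕ) < n - 1 := by
    intro j hj
    have h1 : (j : ℕ) < n := j.isLt
    have h2 : (j : ℕ) ≠ n - 1 := fun h => hj (Fin.ext (by simp [hlastdef, h]))
    omega
  -- q = c • y last with c ≠ 0
  have hqinv : ∀ A ∈ W, matAct A (q n) = q n := fun A hA => matAct_q A (horth A hA)
  have hqadj : q n ∈ Algebra.adjoin ℂ (Set.range y) := (hgen _).mpr hqinv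
  have hqspan := mem_span_weighted hyhom q_isHomogeneous hqadj
  have hsub : {g : MvPolynomial (Fin n) ℂ |
      ∃ α : Fin n →₀ ℕ, (∑ i, d i * α i) = 2 ∧ g = ∏ i, y i ^ α i} ⊆ {y last} := by
    rintro g ⟨α, hα, rfl⟩
    have hzero : ∀ i : Fin n, i ≠ last → α i = 0 := by
      intro i hi
      by_contra hαi
      have h1 : d i * α i ≤ ∑ i, d i * α i :=
        Finset.single_le_sum (f := fun i => d i * α i) (fun i _ => Nat.zero_le _)
          (Finset.mem_univ i)
      have h3 : 3 ≤ d i := hgt i (hne_last i hi)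
      have h4 : 1 ≤ α i := Nat.pos_of_ne_zero hαi
      rw [hα] at h1
      nlinarith
    have hsum2 : ∑ i, d i * α i = d last * α last := by
      refine Finset.sum_eq_single last (fun i _ hi => by rw [hzero i hi, mul_zero]) ?_
      intro h
      exact absurd (Finset.mem_univ last) h
    have hdlast : d last = 2 := hlast
    have hαlast : α last = 1 := by
      rw [hsum2, hdlast] at hα
      omega
    have : ∏ i, y i ^ α i = y last := by
      rw [Finset.prod_eq_single last (fun i _ hi => by rw [hzero i hi, pow_zero]) ?_]
      · rw [hαlast, pow_one]
      · intro h
        exact absurd (Finset.mem_univ last) h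
    simp [this]
  obtain ⟨c, hc⟩ := Submodule.mem_span_singleton.mp
    ((Submodule.span_mono hsub) hqspan)
  have hcne : c ≠ 0 := by
    intro h
    rw [h, zero_smul] at hc
    exact q_ne_zero hn hc.symm
  have h2n : (2 * (n : ℂ)) ≠ 0 := by
    have : (n : ℂ) ≠ 0 := Nat.cast_ne_zero.mpr (by omega)
    simp [this]
  -- the new generators
  set Y : Fin n → MvPolynomial (Fin n) ℂ :=
    fun j => if j = last then (2 * (n : ℂ))⁻¹ • q n else hh j with hY
  have hYlast : Y last = (2 * (n : ℂ))⁻¹ • q n := by rw [hY]; simp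
  have hYne : ∀ j, j ≠ last → Y j = hh j := by
    intro j hj
    rw [hY]
    simp [hj]
  have hqY : q n = (2 * (n : ℂ)) • Y last := by
    rw [hYlast, smul_inv_smul₀ h2n]
  have hylastY : y last = (c⁻¹ * (2 * (n : ℂ))) • Y last := by
    have h1 : y last = c⁻¹ • q n := by rw [← hc, inv_smul_smul₀ hcne]
    rw [h1, hqY, smul_smul]
  -- membership of q in the adjoin of Y
  have hqmem : q n ∈ Algebra.adjoin ℂ (Set.range Y) := by
    rw [hqY]
    exact Subalgebra.smul_mem _ (Algebra.subset_adjoin (Set.mem_range_self last)) _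
  -- invariance of each Y i
  have hYinv : ∀ i, ∀ A ∈ W, matAct A (Y i) = Y i := by
    intro i A hA
    by_cases hi : i = last
    · rw [hi, hYlast, matAct_smul, matAct_q A (horth A hA)]
    · rw [hYne i hi]
      exact (hinvhr i A (horth A hA) (hyinv i A hA)).1
  -- the key inductive generation lemma
  have key : ∀ m : ℕ, ∀ p : MvPolynomial (Fin n) ℂ, p.IsHomogeneous m →
      (∀ A ∈ W, matAct A p = p) → p ∈ Algebra.adjoin ℂ (Set.range Y) := by
    intro m
    induction m using Nat.strong_induction_on with
    | _ m IH =>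
      intro p hphom hpinv
      have hy_mem : ∀ j : Fin n, d j ≤ m → y j ∈ Algebra.adjoin ℂ (Set.range Y) := by
        intro j hj
        by_cases hjl : j = last
        · rw [hjl, hylastY]
          exact Subalgebra.smul_mem _ (Algebra.subset_adjoin (Set.mem_range_self last)) _
        · have hdj3 : 2 < d j := hgt j (hne_last j hjl)
          rw [hsum j]
          refine Subalgebra.add_mem _ ?_ (Subalgebra.mul_mem _ hqmem ?_)
          · rw [← hYne j hjl]
            exact Algebra.subset_adjoin (Set.mem_range_self j)
          · exact IH (d j - 2) (by omega) (rr j) (hrhom j)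
              (fun A hA => (hinvhr j A (horth A hA) (hyinv j A hA)).2)
      have hpadj : p ∈ Algebra.adjoin ℂ (Set.range y) := (hgen p).mpr hpinv
      have hspan := mem_span_weighted hyhom hphom hpadj
      have hle : Submodule.span ℂ {g : MvPolynomial (Fin n) ℂ |
            ∃ α : Fin n →₀ ℕ, (∑ i, d i * α i) = m ∧ g = ∏ i, y i ^ α i} ≤
          Subalgebra.toSubmodule (Algebra.adjoin ℂ (Set.range Y)) := by
        rw [Submodule.span_le]
        rintro g ⟨α, hα, rfl⟩
        refine Subalgebra.prod_mem _ fun i _ => ?_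
        by_cases hαi : α i = 0
        · rw [hαi, pow_zero]
          exact Subalgebra.one_mem _
        · refine Subalgebra.pow_mem _ (hy_mem i ?_) _
          have h1 : d i * α i ≤ ∑ i, d i * α i :=
            Finset.single_le_sum (f := fun i => d i * α i) (fun i _ => Nat.zero_le _)
            (Finset.mem_univ i)
          have h4 : 1 ≤ α i := Nat.pos_of_ne_zero hαi
          rw [hα] at h1
          nlinarith
      exact hle hspan
  refine ⟨Y, ?_, hYinv, ?_, ?_, ?_⟩
  · -- homogeneity
    intro i
    by_cases hi : i = last
    · rw [hi, hYlast, hlast, smul_eq_C_mul]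
      exact q_isHomogeneous.C_mul _
    · rw [hYne i hi]
      exact hhom i
  · -- generation
    intro p
    constructor
    · intro hp A hA
      induction hp using Algebra.adjoin_induction with
      | mem x hx =>
          obtain ⟨i, rfl⟩ := hx
          exact hYinv i A hA
      | algebraMap r => simpa using matAct_C A r
      | add x z hx hz ihx ihz => rw [matAct_add, ihx, ihz]
      | mul x z hx hz ihx ihz => rw [matAct_mul, ihx, ihz]
    · intro hp
      have : p = ∑ k ∈ Finset.range (p.totalDegree + 1), homogeneousComponent k p :=
        (sum_homogeneousComponent p).symm
      rw [this]
      refine Subalgebra.sum_mem _ fun k _ => ?_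
      refine key k _ (homogeneousComponent_isHomogeneous k p) fun A hA => ?_
      rw [← matAct_homogeneousComponent, hp A hA]
  · -- Laplacian of the last generator
    show lap (Y last) = 1
    rw [hYlast, lap_smul, lap_q, smul_eq_C_mul, ← _root_.map_mul]
    rw [inv_mul_cancel₀ (by exact_mod_cast h2n)]
    exact map_one C
  · -- the other generators are harmonic
    intro i hi
    have : i ≠ last := fun h => by
      rw [h] at hi
      simp [hlastdef] at hi
    rw [hYne i this]
    exact hlaph i
end
end

section
/- Let y₁, y₂, y₃ ∈ ℂ[x₁,x₂,x₃] be the H₃ basic invariants. Then the symmetric 3×3 matrix with entries g^{ij} := ∑_{a=1}^{3} (∂yᵢ/∂xₐ)(∂yⱼ/∂xₐ) satisfies, as identities of polynomials in ℂ[x₁,x₂,x₃]: g^{11} = 30y₂³ + 36y₂²y₃³ + 8y₁y₃⁴, g^{12} = 28y₂²y₃ + 8y₂y₃⁴, g^{13} = 20y₁, g^{22} = 8y₁ + 8y₂y₃², g^{23} = 12y₂, g^{33} = 4y₃. -/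
open MvPolynomial

noncomputable section

def ε₁ : MvPolynomial (Fin 3) ℂ := X 0 ^ 2 + X 1 ^ 2 + X 2 ^ 2
def ε₂ : MvPolynomial (Fin 3) ℂ :=
  X 0 ^ 2 * X 1 ^ 2 + X 0 ^ 2 * X 2 ^ 2 + X 1 ^ 2 * X 2 ^ 2
def ε₃ : MvPolynomial (Fin 3) ℂ := X 0 ^ 2 * X 1 ^ 2 * X 2 ^ 2
def δH3 : MvPolynomial (Fin 3) ℂ :=
  (X 0 ^ 2 - X 1 ^ 2) * (X 0 ^ 2 - X 2 ^ 2) * (X 1 ^ 2 - X 2 ^ 2)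

/-- The `H₃` basic invariant of degree 10. -/
def y₁H3 (ζ : ℂ) : MvPolynomial (Fin 3) ℂ :=
  95 * ε₂ * ε₃ - 32 * ε₁ ^ 2 * ε₃ - 5 * ε₁ * ε₂ ^ 2 + 2 * ε₁ ^ 3 * ε₂ + 3 * C ζ * δH3 * ε₂

/-- The `H₃` basic invariant of degree 6. -/
def y₂H3 (ζ : ℂ) : MvPolynomial (Fin 3) ℂ := C ζ * δH3 + ε₁ * ε₂ - 11 * ε₃

/-- The `H₃` basic invariant of degree 2. -/
def y₃H3 : MvPolynomial (Fin 3) ℂ := ε₁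

lemma numC (n : ℕ) [n.AtLeastTwo] :
    (OfNat.ofNat n : MvPolynomial (Fin 3) ℂ) = C (OfNat.ofNat n) :=
  (map_ofNat (C : ℂ →+* MvPolynomial (Fin 3) ℂ) n).symm

set_option maxHeartbeats 4000000 in
set_option maxRecDepth 10000 in
/-- The intersection form `g^{ij} = (∇yᵢ, ∇yⱼ)` of `H₃` in the basic invariants. -/
theorem statement_2 (ζ : ℂ) (hζ : ζ ^ 2 = 5) :
    (∑ a, pderiv a (y₁H3 ζ) * pderiv a (y₁H3 ζ))
      = 30 * (y₂H3 ζ) ^ 3 + 36 * (y₂H3 ζ) ^ 2 * y₃H3 ^ 3 + 8 * (y₁H3 ζ) * y₃H3 ^ 4 ∧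
    (∑ a, pderiv a (y₁H3 ζ) * pderiv a (y₂H3 ζ))
      = 28 * (y₂H3 ζ) ^ 2 * y₃H3 + 8 * (y₂H3 ζ) * y₃H3 ^ 4 ∧
    (∑ a, pderiv a (y₁H3 ζ) * pderiv a y₃H3) = 20 * (y₁H3 ζ) ∧
    (∑ a, pderiv a (y₂H3 ζ) * pderiv a (y₂H3 ζ)) = 8 * (y₁H3 ζ) + 8 * (y₂H3 ζ) * y₃H3 ^ 2 ∧
    (∑ a, pderiv a (y₂H3 ζ) * pderiv a y₃H3) = 12 * (y₂H3 ζ) ∧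
    (∑ a, pderiv a y₃H3 * pderiv a y₃H3) = 4 * y₃H3 := by
  have hz : (C ζ : MvPolynomial (Fin 3) ℂ) ^ 2 = 5 := by
    rw [← map_pow, hζ, map_ofNat]
  refine ⟨?_, ?_, ?_, ?_, ?_, ?_⟩ <;>
    simp only [y₁H3, y₂H3, y₃H3, ε₁, ε₂, ε₃, δH3, Fin.sum_univ_three,
      numC 95, numC 32, numC 5, numC 2, numC 3, numC 11] <;>
    simp only [map_add, map_sub, pderiv_mul, pderiv_pow, pderiv_X_self,
      pderiv_X_of_ne (by decide : (1:Fin 3) ≠ 0), pderiv_X_of_ne (by decide : (2:Fin 3) ≠ 0),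
      pderiv_X_of_ne (by decide : (0:Fin 3) ≠ 1), pderiv_X_of_ne (by decide : (2:Fin 3) ≠ 1),
      pderiv_X_of_ne (by decide : (0:Fin 3) ≠ 2), pderiv_X_of_ne (by decide : (1:Fin 3) ≠ 2),
      pderiv_C, mul_zero, zero_mul, add_zero, zero_add, mul_one] <;>
    simp only [map_ofNat, Nat.cast_ofNat]
  · linear_combination (-36*X 1 ^ 4*X 2 ^ 14 + 18*X 1 ^ 6*X 2 ^ 12 + 30*X 1 ^ 6*X 2 ^ 12*C ζ + 54*X 1 ^ 8*X 2 ^ 10 + -90*X 1 ^ 8*X 2 ^ 10*C ζ + 54*X 1 ^ 10*X 2 ^ 8 + 90*X 1 ^ 10*X 2 ^ 8*C ζ + 18*X 1 ^ 12*X 2 ^ 6 + -30*X 1 ^ 12*X 2 ^ 6*C ζ + -36*X 1 ^ 14*X 2 ^ 4 + 72*X 0 ^ 2*X 1 ^ 2*X 2 ^ 14 + 126*X 0 ^ 2*X 1 ^ 4*X 2 ^ 12 + -90*X 0 ^ 2*X 1 ^ 4*X 2 ^ 12*C ζ + 828*X 0 ^ 2*X 1 ^ 6*X 2 ^ 10 +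 180*X 0 ^ 2*X 1 ^ 6*X 2 ^ 10*C ζ + -2052*X 0 ^ 2*X 1 ^ 8*X 2 ^ 8 + 828*X 0 ^ 2*X 1 ^ 10*X 2 ^ 6 + -180*X 0 ^ 2*X 1 ^ 10*X 2 ^ 6*C ζ + 126*X 0 ^ 2*X 1 ^ 12*X 2 ^ 4 + 90*X 0 ^ 2*X 1 ^ 12*X 2 ^ 4*C ζ + 72*X 0 ^ 2*X 1 ^ 14*X 2 ^ 2 + -36*X 0 ^ 4*X 2 ^ 14 + 126*X 0 ^ 4*X 1 ^ 2*X 2 ^ 12 + 90*X 0 ^ 4*X 1 ^ 2*X 2 ^ 12*C ζ + -2628*X 0 ^ 4*X 1 ^ 4*X 2 ^ 10 + 2322*X 0 ^ 4*X 1 ^ 6*X 2 ^ 8 + -450*X 0 ^ 4*X 1 ^ 6*X 2 ^ 8*C ζ + 2322*X 0 ^ 4*X 1 ^ 8*X 2 ^ 6 + 450*X 0 ^ 4*X 1 ^ 8*X 2 ^ 6*C ζ + -2628*X 0 ^ 4*X 1 ^ 10*X 2 ^ 4 + 126*X 0 ^ 4*X 1 ^ 12*X 2 ^ 2 + -90*X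 0 ^ 4*X 1 ^ 12*X 2 ^ 2*C ζ + -36*X 0 ^ 4*X 1 ^ 14 + 18*X 0 ^ 6*X 2 ^ 12 + -30*X 0 ^ 6*X 2 ^ 12*C ζ + 828*X 0 ^ 6*X 1 ^ 2*X 2 ^ 10 + -180*X 0 ^ 6*X 1 ^ 2*X 2 ^ 10*C ζ + 2322*X 0 ^ 6*X 1 ^ 4*X 2 ^ 8 + 450*X 0 ^ 6*X 1 ^ 4*X 2 ^ 8*C ζ + -6048*X 0 ^ 6*X 1 ^ 6*X 2 ^ 6 + 2322*X 0 ^ 6*X 1 ^ 8*X 2 ^ 4 + -450*X 0 ^ 6*X 1 ^ 8*X 2 ^ 4*C ζ + 828*X 0 ^ 6*X 1 ^ 10*X 2 ^ 2 + 180*X 0 ^ 6*X 1 ^ 10*X 2 ^ 2*C ζ + 18*X 0 ^ 6*X 1 ^ 12 + 30*X 0 ^ 6*X 1 ^ 12*C ζ + 54*X 0 ^ 8*X 2 ^ 10 + 90*X 0 ^ 8*X 2 ^ 10*C ζ + -2052*X 0 ^ 8*X 1 ^ 2*X 2 ^ 8 + 2322*X 0 ^ 8*X 1 ^ 4*X 2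 ^ 6 + -450*X 0 ^ 8*X 1 ^ 4*X 2 ^ 6*C ζ + 2322*X 0 ^ 8*X 1 ^ 6*X 2 ^ 4 + 450*X 0 ^ 8*X 1 ^ 6*X 2 ^ 4*C ζ + -2052*X 0 ^ 8*X 1 ^ 8*X 2 ^ 2 + 54*X 0 ^ 8*X 1 ^ 10 + -90*X 0 ^ 8*X 1 ^ 10*C ζ + 54*X 0 ^ 10*X 2 ^ 8 + -90*X 0 ^ 10*X 2 ^ 8*C ζ + 828*X 0 ^ 10*X 1 ^ 2*X 2 ^ 6 + 180*X 0 ^ 10*X 1 ^ 2*X 2 ^ 6*C ζ + -2628*X 0 ^ 10*X 1 ^ 4*X 2 ^ 4 + 828*X 0 ^ 10*X 1 ^ 6*X 2 ^ 2 + -180*X 0 ^ 10*X 1 ^ 6*X 2 ^ 2*C ζ + 54*X 0 ^ 10*X 1 ^ 8 + 90*X 0 ^ 10*X 1 ^ 8*C ζ + 18*X 0 ^ 12*X 2 ^ 6 + 30*X 0 ^ 12*X 2 ^ 6*C ζ + 126*X 0 ^ 12*X 1 ^ 2*X 2 ^ 4 + -90*X 0 ^ 12*X 1 ^ 2*X 2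 ^ 4*C ζ + 126*X 0 ^ 12*X 1 ^ 4*X 2 ^ 2 + 90*X 0 ^ 12*X 1 ^ 4*X 2 ^ 2*C ζ + 18*X 0 ^ 12*X 1 ^ 6 + -30*X 0 ^ 12*X 1 ^ 6*C ζ + -36*X 0 ^ 14*X 2 ^ 4 + 72*X 0 ^ 14*X 1 ^ 2*X 2 ^ 2 + -36*X 0 ^ 14*X 1 ^ 4) * hz
  · linear_combination (-4*X 1 ^ 4*X 2 ^ 10 + 16*X 1 ^ 6*X 2 ^ 8 + 16*X 1 ^ 8*X 2 ^ 6 + -4*X 1 ^ 10*X 2 ^ 4 + 56*X 0 ^ 2*X 1 ^ 2*X 2 ^ 10 + -100*X 0 ^ 2*X 1 ^ 4*X 2 ^ 8 + 40*X 0 ^ 2*X 1 ^ 6*X 2 ^ 6 + -100*X 0 ^ 2*X 1 ^ 8*X 2 ^ 4 + 56*X 0 ^ 2*X 1 ^ 10*X 2 ^ 2 + -4*X 0 ^ 4*X 2 ^ 10 + -100*X 0 ^ 4*X 1 ^ 2*X 2 ^ 8 + 80*X 0 ^ 4*X 1 ^ 4*X 2 ^ 6 + 80*X 0 ^ 4*X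 1 ^ 6*X 2 ^ 4 + -100*X 0 ^ 4*X 1 ^ 8*X 2 ^ 2 + -4*X 0 ^ 4*X 1 ^ 10 + 16*X 0 ^ 6*X 2 ^ 8 + 40*X 0 ^ 6*X 1 ^ 2*X 2 ^ 6 + 80*X 0 ^ 6*X 1 ^ 4*X 2 ^ 4 + 40*X 0 ^ 6*X 1 ^ 6*X 2 ^ 2 + 16*X 0 ^ 6*X 1 ^ 8 + 16*X 0 ^ 8*X 2 ^ 6 + -100*X 0 ^ 8*X 1 ^ 2*X 2 ^ 4 + -100*X 0 ^ 8*X 1 ^ 4*X 2 ^ 2 + 16*X 0 ^ 8*X 1 ^ 6 + -4*X 0 ^ 10*X 2 ^ 4 + 56*X 0 ^ 10*X 1 ^ 2*X 2 ^ 2 + -4*X 0 ^ 10*X 1 ^ 4) * hz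
  · ring
  · linear_combination (4*X 1 ^ 2*X 2 ^ 8 + 4*X 1 ^ 8*X 2 ^ 2 + 4*X 0 ^ 2*X 2 ^ 8 + -32*X 0 ^ 2*X 1 ^ 2*X 2 ^ 6 + 24*X 0 ^ 2*X 1 ^ 4*X 2 ^ 4 + -32*X 0 ^ 2*X 1 ^ 6*X 2 ^ 2 + 4*X 0 ^ 2*X 1 ^ 8 + 24*X 0 ^ 4*X 1 ^ 2*X 2 ^ 4 + 24*X 0 ^ 4*X 1 ^ 4*X 2 ^ 2 + -32*X 0 ^ 6*X 1 ^ 2*X 2 ^ 2 + 4*X 0 ^ 8*X 2 ^ 2 + 4*X 0 ^ 8*X 1 ^ 2) * hz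
  · ring
  · ring
end
end
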